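/- The average mixing matrix is completely positive semidefinite: there exist real positive semidefinite n×n matrices N_1, …, N_n (namely N_a = Ψ(D_a)) such that the (a,b) entry of M̂ = Σ_r E_r ∘ E_r equals tr(N_aᵀ N_b) for all a, b. In particular, M̂ is symmetric positive semidefinite. -/

import Mathlib

open Matrix BigOperators

/-- The projection `Ψ(M) = ∑ r, E r * M * E r` onto the commutant. -/
def Psi {n d : ℕ} (E : Fin d → Matrix (Fin n) (Fin n) ℝ)
    (M : Matrix (Fin n) (Fin n) ℝ) : Matrix (Fin n) (Fin n) ℝ :=
  ∑ r, E r * M * E r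

lemma real_conjTranspose_eq_transpose {n m : ℕ} (A : Matrix (Fin n) (Fin m) ℝ) :
    Aᴴ = Aᵀ := by
  ext i j; simp [conjTranspose_apply]

lemma psd_sum {n : ℕ} {ι : Type*} (s : Finset ι) (f : ι → Matrix (Fin n) (Fin n) ℝ)
    (h : ∀ i ∈ s, (f i).PosSemidef) : (∑ i ∈ s, f i).PosSemidef := by
  classical
  induction s using Finset.induction with
  | empty => simpa using Matrix.PosSemidef.zero
  | insert _ _ hx ih =>
    rw [Finset.sum_insert hx]
    exact (h _ (Finset.mem_insert_self _ _)).add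
      (ih fun i hi => h i (Finset.mem_insert_of_mem hi))

lemma trace_std_mul {n : ℕ} (a b : Fin n) (Z W : Matrix (Fin n) (Fin n) ℝ) :
    (single a a (1:ℝ) * Z * single b b 1 * W).trace = Z a b * W b a := by
  simp [Matrix.trace, Matrix.mul_apply, Matrix.single, Matrix.diag, ite_and,
    Finset.sum_ite_eq, Finset.sum_ite_eq', mul_comm]

lemma trace_diag_mul {n : ℕ} (x : Fin n → ℝ) (Z : Matrix (Fin n) (Fin n) ℝ) :
    (diagonal x * Z * diagonal x * Z).trace = ∑ i, ∑ j, x i * Z i j * x j * Z j i := by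
  simp [Matrix.trace, Matrix.mul_apply, Matrix.diag, diagonal, ite_and,
    Finset.sum_ite_eq, Finset.sum_ite_eq', mul_comm]

lemma trace_transpose_mul_self_nonneg {n : ℕ} (S : Matrix (Fin n) (Fin n) ℝ) :
    0 ≤ (Sᵀ * S).trace := by
  have : (Sᵀ * S).trace = ∑ i, ∑ j, S j i * S j i := by
    simp [Matrix.trace, Matrix.mul_apply, Matrix.diag]
  rw [this]
  exact Finset.sum_nonneg fun i _ => Finset.sum_nonneg fun j _ => mul_self_nonneg _

/-- The average mixing matrix `M̂ = ∑ r, E r ⊙ E r` is completely positive semidefinite: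
there are real positive semidefinite matrices `N a` (namely `Ψ(D_a)`) with
`M̂ a b = tr((N a)ᵀ (N b))`; in particular `M̂` is (symmetric) positive semidefinite. -/
theorem avg_mixing_cpsd (n d : ℕ) (hn : 1 ≤ n)
    (A : Matrix (Fin n) (Fin n) ℝ) (hA : Aᵀ = A)
    (θ : Fin d → ℝ) (hθ : Function.Injective θ)
    (E : Fin d → Matrix (Fin n) (Fin n) ℝ)
    (hEsymm : ∀ r, (E r)ᵀ = E r)
    (hEidem : ∀ r, E r * E r = E r)
    (hEorth : ∀ r s, r ≠ s → E r * E s = 0)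
    (hEsum : ∑ r, E r = 1)
    (hdecomp : A = ∑ r, θ r • E r) :
    (∃ N : Fin n → Matrix (Fin n) (Fin n) ℝ,
        (∀ a, (N a).PosSemidef) ∧
          ∀ a b, (∑ r, E r ⊙ E r) a b = ((N a)ᵀ * N b).trace) ∧
      (∑ r, E r ⊙ E r).PosSemidef := by
  classical
  set D : Fin n → Matrix (Fin n) (Fin n) ℝ := fun a => single a a 1 with hD
  have hDsymm : ∀ a, (D a)ᵀ = D a := by
    intro a; ext i j
    simp [hD, Matrix.single, and_comm]
  have hDidem : ∀ a, D a * D a = D a := by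
    intro a; simp [hD, Matrix.single_mul_single_same]
  set N : Fin n → Matrix (Fin n) (Fin n) ℝ := fun a => ∑ r, E r * D a * E r with hN
  have hsym : ∀ r (i j : Fin n), E r i j = E r j i := by
    intro r i j
    have h := congrFun (congrFun (hEsymm r) j) i
    simpa using h
  -- each term is symmetric
  have htsymm : ∀ a r, (E r * D a * E r)ᵀ = E r * D a * E r := by
    intro a r
    rw [transpose_mul, transpose_mul, hEsymm, hDsymm, ← mul_assoc]
  have hNsymm : ∀ a, (N a)ᵀ = N a := by
    intro a
    rw [hN, transpose_sum]
    exact Finset.sum_congr rfl fun r _ => htsymm a r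
  -- PosSemidef of each N a
  have hNpsd : ∀ a, (N a).PosSemidef := by
    intro a
    apply psd_sum
    intro r _
    have key : E r * D a * E r = (D a * E r)ᴴ * (D a * E r) := by
      rw [real_conjTranspose_eq_transpose, transpose_mul, hEsymm, hDsymm,
        ← mul_assoc, mul_assoc (E r) (D a) (D a), hDidem]
    rw [key]
    exact posSemidef_conjTranspose_mul_self _
  -- trace of term products
  have htr : ∀ a b r s, ((E r * D a * E r) * (E s * D b * E s)).trace =
      if r = s then E r a b * E r b a else 0 := by
    intro a b r s
    by_cases h : r = s
    · subst h
      have h1 : (E r * D a * E r) * (E r * D b * E r)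
          = E r * (D a * E r * D b * E r) := by
        calc (E r * D a * E r) * (E r * D b * E r)
            = E r * D a * (E r * E r) * D b * E r := by
              simp only [mul_assoc]
          _ = E r * (D a * E r * D b * E r) := by
              rw [hEidem]; simp only [mul_assoc]
      rw [if_pos rfl, h1, trace_mul_comm]
      have h2 : D a * E r * D b * E r * E r = D a * E r * D b * E r := by
        rw [mul_assoc, hEidem]
      rw [h2, trace_std_mul]
    · rw [if_neg h]
      have h1 : (E r * D a * E r) * (E s * D b * E s)
          = E r * D a * (E r * E s) * D b * E s := by
        simp only [mul_assoc]
      rw [h1, hEorth r s h]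
      simp
  have htrace : ∀ a b, (∑ r, E r ⊙ E r) a b = ((N a)ᵀ * N b).trace := by
    intro a b
    rw [hNsymm, hN]
    rw [Finset.sum_mul_sum, trace_sum]
    simp only [trace_sum, htr, Finset.sum_ite_eq, Finset.mem_univ, if_true,
      Matrix.sum_apply, hadamard_apply]
    exact Finset.sum_congr rfl fun r _ => by rw [hsym r b a]
  refine ⟨⟨N, hNpsd, htrace⟩, ?_⟩
  apply PosSemidef.of_dotProduct_mulVec_nonneg
  · -- Hermitian
    rw [Matrix.IsHermitian, real_conjTranspose_eq_transpose, transpose_sum]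
    refine Finset.sum_congr rfl fun r _ => ?_
    ext i j
    simp [hadamard_apply, hsym r j i]
  · intro x
    have hx : star x = x := by ext i; simp
    rw [hx]
    have key : ∀ r : Fin d, x ⬝ᵥ ((E r ⊙ E r) *ᵥ x)
        = ((E r * diagonal x * E r)ᵀ * (E r * diagonal x * E r)).trace := by
      intro r
      have hS : (E r * diagonal x * E r)ᵀ = E r * diagonal x * E r := by
        rw [transpose_mul, transpose_mul, hEsymm, diagonal_transpose, ← mul_assoc]
      rw [hS]
      have h1 : (E r * diagonal x * E r) * (E r * diagonal x * E r)
          = E r * (diagonal x * E r * diagonal x * E r) := by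
        calc (E r * diagonal x * E r) * (E r * diagonal x * E r)
            = E r * diagonal x * (E r * E r) * diagonal x * E r := by
              simp only [mul_assoc]
          _ = E r * (diagonal x * E r * diagonal x * E r) := by
              rw [hEidem]; simp only [mul_assoc]
      rw [h1, trace_mul_comm]
      have h2 : diagonal x * E r * diagonal x * E r * E r
          = diagonal x * E r * diagonal x * E r := by
        rw [mul_assoc, hEidem]
      rw [h2, trace_diag_mul]
      simp only [dotProduct, mulVec, hadamard_apply, Finset.mul_sum]
      refine Finset.sum_congr rfl fun i _ => Finset.sum_congr rfl fun j _ => ?_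
      rw [hsym r j i]; ring
    calc (0:ℝ) ≤ ∑ r, ((E r * diagonal x * E r)ᵀ * (E r * diagonal x * E r)).trace :=
          Finset.sum_nonneg fun r _ => trace_transpose_mul_self_nonneg _
      _ = ∑ r, x ⬝ᵥ ((E r ⊙ E r) *ᵥ x) := by
          exact Finset.sum_congr rfl fun r _ => (key r).symm
      _ = x ⬝ᵥ ((∑ r, E r ⊙ E r) *ᵥ x) := by
          have hgen : ∀ (s : Finset (Fin d)),
              x ⬝ᵥ ((∑ r ∈ s, E r ⊙ E r) *ᵥ x) = ∑ r ∈ s, x ⬝ᵥ ((E r ⊙ E r) *ᵥ x) := by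
            intro s
            induction s using Finset.induction with
            | empty => simp
            | insert _ _ hy ih => simp [Finset.sum_insert hy, add_mulVec, dotProduct_add, ih]
          exact (hgen Finset.univ).symm
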